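/- Let (ρₙ, mₙ) be sequences with ρₙ > 0, mₙ ∈ ℝᵈ-valued measurable functions on a bounded domain, such that mₙ ⇀ m and ρₙ ⇀ ρ weakly in L¹, and (mₙ ⊗ mₙ)/ρₙ ⇀* R weakly-* in matrix-valued measures. Then for every ξ ∈ ℝᵈ, the measure R:(ξ⊗ξ) − (|m·ξ|²/ρ) dx is non-negative; i.e., the defect R − (m⊗m)/ρ dx takes values in positive semi-definite matrices. -/

import Mathlib

open MeasureTheory Filter
open scoped Topology

private lemma clamp_mem {k t : ℝ} (hk : 0 ≤ k) :
    |max (-k) (min k t)| ≤ |t| ∧ |max (-k) (min k t)| ≤ k := by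
  constructor
  · rcases le_total t 0 with ht | ht
    · rw [min_eq_right (ht.trans hk)]
      have h1 : max (-k) t ≤ 0 := max_le (neg_nonpos.2 hk) ht
      rw [abs_of_nonpos h1, abs_of_nonpos ht, neg_le_neg_iff]
      exact le_max_right _ _
    · rw [abs_of_nonneg ht, abs_of_nonneg (le_max_of_le_right (le_min hk ht))]
      exact max_le (by linarith) (min_le_right _ _)
  · rw [abs_le]
    exact ⟨le_max_left _ _, max_le (by linarith) (min_le_left _ _)⟩

private lemma clamp_eq {k t : ℝ} (h : |t| ≤ k) : max (-k) (min k t) = t := by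
  rw [abs_le] at h
  rw [min_eq_right h.2, max_eq_right h.1]

private lemma quad_le_div {s r : ℝ} (l : ℝ) (hr : 0 < r) :
    2 * l * s - l ^ 2 * r ≤ s ^ 2 / r := by
  rw [le_div_iff₀ hr]
  nlinarith [sq_nonneg (s - l * r)]

private lemma quad_abs_le {s r l : ℝ} (hr : 0 < r) (hl : |l| ≤ |s / r|) :
    |2 * l * s - l ^ 2 * r| ≤ 3 * (s ^ 2 / r) := by
  have hr' : |r| = r := abs_of_pos hr
  rw [abs_div, hr'] at hl
  have habs : |l| * |s| ≤ s ^ 2 / r := by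
    calc |l| * |s| ≤ (|s| / r) * |s| := mul_le_mul_of_nonneg_right hl (abs_nonneg s)
      _ = s ^ 2 / r := by rw [div_mul_eq_mul_div, abs_mul_abs_self, ← sq]
  have hls : -(s ^ 2 / r) ≤ l * s ∧ l * s ≤ s ^ 2 / r :=
    abs_le.1 (by rw [abs_mul]; exact habs)
  have hl2 : l ^ 2 * r ≤ s ^ 2 / r := by
    have h1 : l ^ 2 ≤ (|s| / r) ^ 2 := by
      rw [← sq_abs l]; exact pow_le_pow_left₀ (abs_nonneg l) hl 2
    have h2 : (|s| / r) ^ 2 * r = s ^ 2 / r := by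
      rw [div_pow, sq_abs]; field_simp
    nlinarith
  have hl2' : 0 ≤ l ^ 2 * r := mul_nonneg (sq_nonneg l) hr.le
  rw [abs_le]
  constructor
  · linarith [hls.1]
  · linarith [hls.2]

private lemma sq_sum_div {d : ℕ} (ξ a : Fin d → ℝ) (r : ℝ) :
    (∑ i, a i * ξ i) ^ 2 / r = ∑ i, ∑ j, ξ i * ξ j * (a i * a j / r) := by
  rw [sq, Finset.sum_mul_sum, Finset.sum_div]
  refine Finset.sum_congr rfl fun i _ => ?_
  rw [Finset.sum_div]
  refine Finset.sum_congr rfl fun j _ => ?_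
  ring

private lemma int_mul_bdd {α : Type*} [MeasurableSpace α] {μ : Measure α}
    {f g : α → ℝ} (hf : Integrable f μ) (hg : AEStronglyMeasurable g μ)
    (C : ℝ) (hC : ∀ x, |g x| ≤ C) : Integrable (fun x => f x * g x) μ :=
  (hf.bdd_mul (c := C) hg (Eventually.of_forall fun x => by simpa [Real.norm_eq_abs] using hC x)).congr
    (Eventually.of_forall fun x => mul_comm _ _)


/-- If `mₙ ⇀ m`, `ρₙ ⇀ ρ` weakly in `L¹` with `ρₙ > 0`, and the convective terms
`(mₙ ⊗ mₙ)/ρₙ` converge weakly-* to a matrix-valued measure `R` (represented by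
its action `Rfun i j φ` on continuous test functions), then for every `ξ ∈ ℝᵈ`
the measure `R:(ξ⊗ξ) − (|m·ξ|²/ρ) dx` is non-negative, i.e. the defect
`R − (m⊗m)/ρ dx` takes values in positive semi-definite matrices. -/
theorem convective_defect_posSemidef (d : ℕ)
    (Ω : Set (Fin d → ℝ)) (hΩb : Bornology.IsBounded Ω) (hΩm : MeasurableSet Ω)
    (ρn : ℕ → (Fin d → ℝ) → ℝ) (ρ : (Fin d → ℝ) → ℝ)
    (mn : ℕ → (Fin d → ℝ) → (Fin d → ℝ)) (m : (Fin d → ℝ) → (Fin d → ℝ))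
    (hρn_pos : ∀ n x, 0 < ρn n x) (hρ_nonneg : ∀ x, 0 ≤ ρ x)
    (hρn_int : ∀ n, IntegrableOn (ρn n) Ω) (hρ_int : IntegrableOn ρ Ω)
    (hmn_int : ∀ n i, IntegrableOn (fun x => mn n x i) Ω)
    (hm_int : ∀ i, IntegrableOn (fun x => m x i) Ω)
    (hρ_weak : ∀ g : (Fin d → ℝ) → ℝ, Measurable g → (∃ C, ∀ x, |g x| ≤ C) →
      Tendsto (fun n => ∫ x in Ω, ρn n x * g x) atTop (𝓝 (∫ x in Ω, ρ x * g x)))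
    (hm_weak : ∀ i, ∀ g : (Fin d → ℝ) → ℝ, Measurable g → (∃ C, ∀ x, |g x| ≤ C) →
      Tendsto (fun n => ∫ x in Ω, mn n x i * g x) atTop
        (𝓝 (∫ x in Ω, m x i * g x)))
    (hconv_int : ∀ n i j, IntegrableOn (fun x => mn n x i * mn n x j / ρn n x) Ω)
    (Rfun : Fin d → Fin d → (((Fin d → ℝ) → ℝ) → ℝ))
    (hRlim : ∀ i j, ∀ φ : (Fin d → ℝ) → ℝ, Continuous φ →
      Tendsto (fun n => ∫ x in Ω, (mn n x i * mn n x j / ρn n x) * φ x) atTop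
        (𝓝 (Rfun i j φ)))
    (hlim_int : ∀ ξ : Fin d → ℝ,
      IntegrableOn (fun x => (∑ i, m x i * ξ i) ^ 2 / ρ x) Ω) :
    ∀ ξ : Fin d → ℝ, ∀ φ : (Fin d → ℝ) → ℝ, Continuous φ → (∀ x, 0 ≤ φ x) →
      ∫ x in Ω, ((∑ i, m x i * ξ i) ^ 2 / ρ x) * φ x
        ≤ ∑ i, ∑ j, ξ i * ξ j * Rfun i j φ := by
  intro ξ φ hφc hφ0
  -- a bound for φ on Ω
  obtain ⟨C0, hC0⟩ := (Metric.isCompact_of_isClosed_isBounded isClosed_closure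
    hΩb.closure).exists_bound_of_continuousOn hφc.continuousOn
  set C := max C0 0 with hCdef
  have hCnn : (0:ℝ) ≤ C := le_max_right _ _
  have hC : ∀ x ∈ Ω, |φ x| ≤ C := fun x hx =>
    le_max_of_le_left (by simpa [Real.norm_eq_abs] using hC0 x (subset_closure hx))
  -- truncated test function
  set Φ : (Fin d → ℝ) → ℝ := Ω.indicator φ with hΦdef
  have hΦmeas : Measurable Φ := hφc.measurable.indicator hΩm
  have hΦbdd : ∀ x, |Φ x| ≤ C := by
    intro x; by_cases hx : x ∈ Ω
    · rw [hΦdef, Set.indicator_of_mem hx]; exact hC x hx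
    · rw [hΦdef, Set.indicator_of_notMem hx]; simpa using hCnn
  have hΦnn : ∀ x, 0 ≤ Φ x := fun x => Set.indicator_nonneg (fun y _ => hφ0 y) x
  have hΦeq : ∀ x ∈ Ω, Φ x = φ x := fun x hx => Set.indicator_of_mem hx φ
  -- momentum projection and measurable versions
  have hs_int : IntegrableOn (fun x => ∑ i, m x i * ξ i) Ω :=
    integrable_finset_sum _ fun i _ => (hm_int i).mul_const (ξ i)
  have hρ_aesm : AEStronglyMeasurable ρ (volume.restrict Ω) := hρ_int.1
  have hs_aesm : AEStronglyMeasurable (fun x => ∑ i, m x i * ξ i)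
      (volume.restrict Ω) := hs_int.1
  set ρ' : (Fin d → ℝ) → ℝ := hρ_aesm.mk ρ with hρ'def
  set s' : (Fin d → ℝ) → ℝ := hs_aesm.mk _ with hs'def
  have hρ'_meas : Measurable ρ' := hρ_aesm.stronglyMeasurable_mk.measurable
  have hs'_meas : Measurable s' := hs_aesm.stronglyMeasurable_mk.measurable
  have hρ'_ae : ρ =ᵐ[volume.restrict Ω] ρ' := hρ_aesm.ae_eq_mk
  have hs'_ae : (fun x => ∑ i, m x i * ξ i) =ᵐ[volume.restrict Ω] s' :=
    hs_aesm.ae_eq_mk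
  -- the truncated multipliers
  set lam : ℕ → (Fin d → ℝ) → ℝ := fun k x =>
    if ρ' x = 0 then 0 else max (-(k:ℝ)) (min (k:ℝ) (s' x / ρ' x)) with hlamdef
  have hlam_meas : ∀ k, Measurable (lam k) := by
    intro k
    exact Measurable.ite (hρ'_meas (measurableSet_singleton 0)) measurable_const
      (measurable_const.max (measurable_const.min (hs'_meas.div hρ'_meas)))
  have hlam_bdd : ∀ k x, |lam k x| ≤ (k:ℝ) := by
    intro k x
    rw [hlamdef]; dsimp only
    split
    · simpa using (Nat.cast_nonneg k : (0:ℝ) ≤ k)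
    · exact (clamp_mem (Nat.cast_nonneg k)).2
  have hlam_le : ∀ k x, ρ' x ≠ 0 → |lam k x| ≤ |s' x / ρ' x| := by
    intro k x hx
    rw [hlamdef]; dsimp only
    rw [if_neg hx]
    exact (clamp_mem (Nat.cast_nonneg k)).1
  have hlam_zero : ∀ k x, ρ' x = 0 → lam k x = 0 := by
    intro k x hx
    rw [hlamdef]; dsimp only; rw [if_pos hx]
  -- rewrite goal with Φ
  have hgoal_eq : ∫ x in Ω, ((∑ i, m x i * ξ i) ^ 2 / ρ x) * φ x
      = ∫ x in Ω, ((∑ i, m x i * ξ i) ^ 2 / ρ x) * Φ x :=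
    setIntegral_congr_fun hΩm (fun x hx => by rw [hΦeq x hx])
  rw [hgoal_eq]
  -- integrability of the convective integrands against Φ
  have hIint : ∀ n, Integrable
      (fun x => ((∑ i, mn n x i * ξ i) ^ 2 / ρn n x) * Φ x) (volume.restrict Ω) := by
    intro n
    have h := integrable_finset_sum (μ := volume.restrict Ω) Finset.univ
      (f := fun i x => ∑ j, ξ i * ξ j * ((mn n x i * mn n x j / ρn n x) * Φ x))
      (fun i _ => integrable_finset_sum _ fun j _ =>
        (int_mul_bdd (hconv_int n i j) hΦmeas.aestronglyMeasurable C hΦbdd).const_mul _)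
    refine h.congr (Eventually.of_forall fun x => ?_)
    dsimp only
    symm
    rw [sq_sum_div, Finset.sum_mul]
    refine Finset.sum_congr rfl fun i _ => ?_
    rw [Finset.sum_mul]
    exact Finset.sum_congr rfl fun j _ => by ring
  -- convergence of the convective terms
  have hI : Tendsto (fun n => ∫ x in Ω, ((∑ i, mn n x i * ξ i) ^ 2 / ρn n x) * Φ x)
      atTop (𝓝 (∑ i, ∑ j, ξ i * ξ j * Rfun i j φ)) := by
    have heq : ∀ n, ∫ x in Ω, ((∑ i, mn n x i * ξ i) ^ 2 / ρn n x) * Φ x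
        = ∑ i, ∑ j, ξ i * ξ j * ∫ x in Ω, (mn n x i * mn n x j / ρn n x) * φ x := by
      intro n
      have hint : ∀ (i j : Fin d), Integrable
          (fun x => ξ i * ξ j * ((mn n x i * mn n x j / ρn n x) * Φ x))
          (volume.restrict Ω) := fun i j =>
        (int_mul_bdd (hconv_int n i j) hΦmeas.aestronglyMeasurable C hΦbdd).const_mul _
      have h1 : ∫ x in Ω, ((∑ i, mn n x i * ξ i) ^ 2 / ρn n x) * Φ x
          = ∫ x in Ω, ∑ i, ∑ j, ξ i * ξ j * ((mn n x i * mn n x j / ρn n x) * Φ x) := by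
        refine setIntegral_congr_fun hΩm (fun x _ => ?_)
        rw [sq_sum_div, Finset.sum_mul]
        refine Finset.sum_congr rfl fun i _ => ?_
        rw [Finset.sum_mul]
        exact Finset.sum_congr rfl fun j _ => by ring
      rw [h1, integral_finset_sum _ fun i _ => integrable_finset_sum _ fun j _ => hint i j]
      refine Finset.sum_congr rfl fun i _ => ?_
      rw [integral_finset_sum _ fun j _ => hint i j]
      refine Finset.sum_congr rfl fun j _ => ?_
      rw [integral_const_mul]
      congr 1
      exact setIntegral_congr_fun hΩm (fun x hx => by rw [hΦeq x hx])
    rw [show (fun n => ∫ x in Ω, ((∑ i, mn n x i * ξ i) ^ 2 / ρn n x) * Φ x)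
        = fun n => ∑ i, ∑ j, ξ i * ξ j * ∫ x in Ω, (mn n x i * mn n x j / ρn n x) * φ x
        from funext heq]
    exact tendsto_finset_sum _ fun i _ => tendsto_finset_sum _ fun j _ =>
      (hRlim i j φ hφc).const_mul _
  -- the key estimate for each truncation level
  have hLk_le : ∀ k : ℕ,
      ∫ x in Ω, (2 * lam k x * (∑ i, m x i * ξ i) - (lam k x) ^ 2 * ρ x) * Φ x
        ≤ ∑ i, ∑ j, ξ i * ξ j * Rfun i j φ := by
    intro k
    set g1 : (Fin d → ℝ) → ℝ := fun x => lam k x * Φ x with hg1def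
    set g2 : (Fin d → ℝ) → ℝ := fun x => (lam k x) ^ 2 * Φ x with hg2def
    have hg1m : Measurable g1 := (hlam_meas k).mul hΦmeas
    have hg2m : Measurable g2 := ((hlam_meas k).pow_const 2).mul hΦmeas
    have hg1b : ∀ x, |g1 x| ≤ (k:ℝ) * C := fun x => by
      rw [hg1def]; dsimp only; rw [abs_mul]
      exact mul_le_mul (hlam_bdd k x) (hΦbdd x) (abs_nonneg _) (Nat.cast_nonneg k)
    have hg2b : ∀ x, |g2 x| ≤ (k:ℝ) ^ 2 * C := fun x => by
      rw [hg2def]; dsimp only; rw [abs_mul, abs_pow]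
      exact mul_le_mul (pow_le_pow_left₀ (abs_nonneg _) (hlam_bdd k x) 2) (hΦbdd x)
        (abs_nonneg _) (pow_nonneg (Nat.cast_nonneg k) 2)
    -- linearity of the quadratic test expression
    have key : ∀ (a : (Fin d → ℝ) → (Fin d → ℝ)) (r : (Fin d → ℝ) → ℝ),
        (∀ i, IntegrableOn (fun x => a x i) Ω) → IntegrableOn r Ω →
        ∫ x in Ω, (2 * lam k x * (∑ i, a x i * ξ i) - (lam k x) ^ 2 * r x) * Φ x
          = (2 * ∑ i, ξ i * ∫ x in Ω, a x i * g1 x) - ∫ x in Ω, r x * g2 x := by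
      intro a r ha hr
      have hint1 : ∀ i : Fin d, Integrable (fun x => ξ i * (2 * (a x i * g1 x)))
          (volume.restrict Ω) := fun i =>
        (((int_mul_bdd (ha i) hg1m.aestronglyMeasurable _ hg1b).const_mul 2).const_mul (ξ i))
      have hint2 : Integrable (fun x => r x * g2 x) (volume.restrict Ω) :=
        int_mul_bdd hr hg2m.aestronglyMeasurable _ hg2b
      have hpt : ∀ x, (2 * lam k x * (∑ i, a x i * ξ i) - (lam k x) ^ 2 * r x) * Φ x
          = (∑ i, ξ i * (2 * (a x i * g1 x))) - r x * g2 x := by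
        intro x
        have h2 : (∑ i, ξ i * (2 * (a x i * g1 x)))
            = (∑ i, a x i * ξ i) * (2 * (lam k x * Φ x)) := by
          rw [Finset.sum_mul]
          refine Finset.sum_congr rfl fun i _ => ?_
          rw [hg1def]; dsimp only; ring
        rw [h2, hg2def]; dsimp only; ring
      simp_rw [hpt]
      rw [integral_sub (integrable_finset_sum _ fun i _ => hint1 i) hint2,
        integral_finset_sum _ fun i _ => hint1 i]
      congr 1
      rw [Finset.mul_sum]
      refine Finset.sum_congr rfl fun i _ => ?_
      rw [integral_const_mul, integral_const_mul]
      ring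
    -- integrability of the quadratic test expression
    have hlin_int : ∀ (a : (Fin d → ℝ) → (Fin d → ℝ)) (r : (Fin d → ℝ) → ℝ),
        (∀ i, IntegrableOn (fun x => a x i) Ω) → IntegrableOn r Ω →
        Integrable (fun x => (2 * lam k x * (∑ i, a x i * ξ i)
          - (lam k x) ^ 2 * r x) * Φ x) (volume.restrict Ω) := by
      intro a r ha hr
      have h1 : Integrable (fun x => (∑ i, a x i * ξ i) * (2 * g1 x))
          (volume.restrict Ω) := by
        refine int_mul_bdd (integrable_finset_sum _ fun i _ => (ha i).mul_const (ξ i))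
          (hg1m.aestronglyMeasurable.const_mul 2) (2 * ((k:ℝ) * C)) fun x => ?_
        rw [abs_mul, abs_two]
        exact mul_le_mul_of_nonneg_left (hg1b x) (by norm_num)
      have h2 : Integrable (fun x => r x * g2 x) (volume.restrict Ω) :=
        int_mul_bdd hr hg2m.aestronglyMeasurable _ hg2b
      refine (h1.sub h2).congr (Eventually.of_forall fun x => ?_)
      simp only [Pi.sub_apply, hg1def, hg2def]
      ring
    -- comparison at level n
    have hJle : ∀ n, (2 * ∑ i, ξ i * ∫ x in Ω, mn n x i * g1 x)
        - ∫ x in Ω, ρn n x * g2 x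
        ≤ ∫ x in Ω, ((∑ i, mn n x i * ξ i) ^ 2 / ρn n x) * Φ x := by
      intro n
      rw [← key (mn n) (ρn n) (hmn_int n) (hρn_int n)]
      refine integral_mono (hlin_int (mn n) (ρn n) (hmn_int n) (hρn_int n)) (hIint n)
        fun x => ?_
      exact mul_le_mul_of_nonneg_right (quad_le_div (lam k x) (hρn_pos n x)) (hΦnn x)
    -- passage to the limit in n
    have hJtend : Tendsto (fun n => (2 * ∑ i, ξ i * ∫ x in Ω, mn n x i * g1 x)
        - ∫ x in Ω, ρn n x * g2 x) atTop
        (𝓝 ((2 * ∑ i, ξ i * ∫ x in Ω, m x i * g1 x) - ∫ x in Ω, ρ x * g2 x)) :=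
      ((tendsto_finset_sum _ fun i _ =>
        (hm_weak i g1 hg1m ⟨_, hg1b⟩).const_mul (ξ i)).const_mul 2).sub
        (hρ_weak g2 hg2m ⟨_, hg2b⟩)
    have hle : (2 * ∑ i, ξ i * ∫ x in Ω, m x i * g1 x) - ∫ x in Ω, ρ x * g2 x
        ≤ ∑ i, ∑ j, ξ i * ξ j * Rfun i j φ :=
      le_of_tendsto_of_tendsto' hJtend hI hJle
    rw [key m ρ hm_int hρ_int]
    exact hle
  -- dominated convergence in the truncation level
  have hDCT : Tendsto (fun k =>
      ∫ x in Ω, (2 * lam k x * (∑ i, m x i * ξ i) - (lam k x) ^ 2 * ρ x) * Φ x)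
      atTop (𝓝 (∫ x in Ω, ((∑ i, m x i * ξ i) ^ 2 / ρ x) * Φ x)) := by
    refine tendsto_integral_of_dominated_convergence
      (fun x => 3 * ((∑ i, m x i * ξ i) ^ 2 / ρ x) * C) (fun k => ?_)
      (((hlim_int ξ).const_mul 3).mul_const C) (fun k => ?_) ?_
    · exact ((((hlam_meas k).aestronglyMeasurable.const_mul 2).mul hs_aesm).sub
        (((hlam_meas k).pow_const 2).aestronglyMeasurable.mul hρ_aesm)).mul
        hΦmeas.aestronglyMeasurable
    · filter_upwards [hρ'_ae, hs'_ae] with x hρx hsx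
      rw [Real.norm_eq_abs, abs_mul]
      by_cases hx : ρ x = 0
      · have hρ'x : ρ' x = 0 := by rw [← hρx]; exact hx
        rw [hlam_zero k x hρ'x, hx]
        simp
      · have hρpos : 0 < ρ x := lt_of_le_of_ne (hρ_nonneg x) (Ne.symm hx)
        have hρ'x : ρ' x ≠ 0 := by rw [← hρx]; exact hx
        have hl : |lam k x| ≤ |(∑ i, m x i * ξ i) / ρ x| := by
          have := hlam_le k x hρ'x
          rwa [← hρx, ← hsx] at this
        refine mul_le_mul (quad_abs_le hρpos hl) (hΦbdd x) (abs_nonneg _) ?_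
        positivity
    · filter_upwards [hρ'_ae, hs'_ae] with x hρx hsx
      by_cases hx : ρ x = 0
      · have hρ'x : ρ' x = 0 := by rw [← hρx]; exact hx
        have hall : ∀ k : ℕ, (2 * lam k x * (∑ i, m x i * ξ i)
            - (lam k x) ^ 2 * ρ x) * Φ x = 0 := by
          intro k; rw [hlam_zero k x hρ'x]; ring
        have htarget : (∑ i, m x i * ξ i) ^ 2 / ρ x * Φ x = 0 := by
          rw [hx, div_zero, zero_mul]
        rw [htarget]
        exact Tendsto.congr (fun k => (hall k).symm) tendsto_const_nhds
      · have hρpos : 0 < ρ x := lt_of_le_of_ne (hρ_nonneg x) (Ne.symm hx)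
        have hρ'x : ρ' x ≠ 0 := by rw [← hρx]; exact hx
        obtain ⟨N, hN⟩ := exists_nat_ge (|(∑ i, m x i * ξ i) / ρ x|)
        refine tendsto_atTop_of_eventually_const (i₀ := N) fun k hk => ?_
        have hlam_eq : lam k x = (∑ i, m x i * ξ i) / ρ x := by
          rw [hlamdef]; dsimp only
          rw [if_neg hρ'x, ← hρx, ← hsx]
          exact clamp_eq (hN.trans (Nat.cast_le.2 hk))
        rw [hlam_eq]
        congr 1
        field_simp
        ring
  exact le_of_tendsto' hDCT hLk_le
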